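/- Let X be a compact Hausdorff βω-space. Let p be a nonprincipal ultrafilter on ℕ which is a discretely weak P-point of the subspace ω* of nonprincipal ultrafilters on ℕ, and let q be a nonprincipal discrete ultrafilter on ℕ. Suppose x ∈ X, (d_m) is an injective sequence in X whose range is a discrete subspace, (e_n) is any sequence in X, x is the p-limit of (d_m) and also the q-limit of (e_n), and {n : e_n = x} ∉ q. Then p ≤_RK q. -/

import Mathlib

open Filter Topology

/-- The set of nonprincipal ultrafilters on `ℕ` (the Stone–Čech remainder `ω*`). -/
def omegaStar : Set (Ultrafilter ℕ) := {u : Ultrafilter ℕ | ∀ n : ℕ, u ≠ pure n}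

/-- A subset `D` of `X` is C*-embedded if every bounded continuous real-valued function on
`D` extends continuously to `X`. -/
def CStarEmbedded {X : Type*} [TopologicalSpace X] (D : Set X) : Prop :=
  ∀ f : C(↥D, ℝ), (∃ M : ℝ, ∀ d : ↥D, |f d| ≤ M) →
    ∃ g : C(X, ℝ), ∀ d : ↥D, g ↑d = f d

/-- `X` is a βω-space (van Douwen): every countable discrete subset of `X` with compact
closure is C*-embedded in `X`. -/
def IsBetaOmegaSpace (X : Type*) [TopologicalSpace X] : Prop :=
  ∀ D : Set X, D.Countable → DiscreteTopology ↥D → IsCompact (closure D) →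
    CStarEmbedded D

section Helpers
variable {X : Type*} [TopologicalSpace X]

lemma mem_closure_image_of_tendsto {y : ℕ → X} {u : Ultrafilter ℕ} {z : X}
    (h : Tendsto y ↑u (𝓝 z)) {T : Set ℕ} (hT : T ∈ u) : z ∈ closure (y '' T) :=
  mem_closure_of_tendsto h (mem_of_superset hT fun n hn => Set.mem_image_of_mem y hn)

lemma exists_ultrafilter_tendsto {y : ℕ → X} {z : X} (hz : z ∈ closure (Set.range y)) :
    ∃ u : Ultrafilter ℕ, Tendsto y ↑u (𝓝 z) := by
  set F : Filter X := 𝓝 z ⊓ 𝓟 (Set.range y) with hF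
  haveI : (Filter.comap y F).NeBot := by
    apply Filter.comap_neBot
    intro t ht
    rcases Filter.mem_inf_iff.mp ht with ⟨U, hU, V, hV, rfl⟩
    have hVy : Set.range y ⊆ V := hV
    rcases mem_closure_iff_nhds.mp hz U hU with ⟨w, hwU, n, rfl⟩
    exact ⟨n, hwU, hVy ⟨n, rfl⟩⟩
  refine ⟨Ultrafilter.of (Filter.comap y F), ?_⟩
  calc Filter.map y ↑(Ultrafilter.of (Filter.comap y F))
      ≤ Filter.map y (Filter.comap y F) := Filter.map_mono (Ultrafilter.of_le _)
    _ ≤ F := Filter.map_comap_le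
    _ ≤ 𝓝 z := inf_le_left

lemma discrete_of_isolated {S : Set X} (h : ∀ z ∈ S, ∃ U, IsOpen U ∧ U ∩ S = {z}) :
    DiscreteTopology ↥S := by
  refine discreteTopology_iff_isOpen_singleton.mpr fun a => ?_
  obtain ⟨U, hU, hUS⟩ := h a a.2
  have : (Subtype.val ⁻¹' U : Set ↥S) = {a} := by
    ext b
    simp only [Set.mem_preimage, Set.mem_singleton_iff]
    constructor
    · intro hb
      have : (b : X) ∈ U ∩ S := ⟨hb, b.2⟩
      rw [hUS] at this
      exact Subtype.ext this
    · intro hb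
      have : (a : X) ∈ U ∩ S := by rw [hUS]; rfl
      rw [hb]; exact this.1
  rw [← this]
  exact (hU.preimage continuous_subtype_val)

lemma isolated_of_discrete {S : Set X} (h : DiscreteTopology ↥S) :
    ∀ z ∈ S, ∃ U, IsOpen U ∧ U ∩ S = {z} := by
  intro z hz
  have hopen : IsOpen ({⟨z, hz⟩} : Set ↥S) := isOpen_discrete _
  rcases isOpen_induced_iff.mp hopen with ⟨U, hU, hUeq⟩
  refine ⟨U, hU, ?_⟩
  ext w
  constructor
  · rintro ⟨hwU, hwS⟩
    have : (⟨w, hwS⟩ : ↥S) ∈ ({⟨z, hz⟩} : Set ↥S) := by rw [← hUeq]; exact hwU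
    exact congrArg Subtype.val this
  · intro hw
    have hz' : (⟨z, hz⟩ : ↥S) ∈ Subtype.val ⁻¹' U := by rw [hUeq]; rfl
    rw [Set.mem_singleton_iff] at hw
    subst hw
    exact ⟨hz', hz⟩

lemma closure_disjoint_of_cstar {y : ℕ → X} (hinj : Function.Injective y)
    (hdisc : DiscreteTopology ↥(Set.range y)) (hcs : CStarEmbedded (Set.range y))
    (T : Set ℕ) : closure (y '' T) ∩ closure (y '' Tᶜ) = ∅ := by
  classical
  haveI := hdisc
  set f : C(↥(Set.range y), ℝ) :=
    ⟨fun z => if ∃ n ∈ T, y n = (z : X) then (1:ℝ) else 0, continuous_of_discreteTopology⟩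
    with hf
  obtain ⟨g, hg⟩ := hcs f ⟨1, fun z => by
    simp only [hf, ContinuousMap.coe_mk]
    split <;> simp⟩
  have hg1 : ∀ n ∈ T, g (y n) = 1 := by
    intro n hn
    have := hg ⟨y n, ⟨n, rfl⟩⟩
    simp only [hf, ContinuousMap.coe_mk] at this
    rw [this, if_pos ⟨n, hn, rfl⟩]
  have hg0 : ∀ n ∈ Tᶜ, g (y n) = 0 := by
    intro n hn
    have := hg ⟨y n, ⟨n, rfl⟩⟩
    simp only [hf, ContinuousMap.coe_mk] at this
    rw [this, if_neg]
    rintro ⟨m, hm, hmn⟩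
    exact hn (hinj hmn ▸ hm)
  ext z
  simp only [Set.mem_inter_iff, Set.mem_empty_iff_false, iff_false, not_and]
  intro h1 h2
  have e1 : g z = 1 := by
    have hmem : g z ∈ closure (g '' (y '' T)) :=
      image_closure_subset_closure_image g.continuous ⟨z, h1, rfl⟩
    have hsub : g '' (y '' T) ⊆ {1} := by
      rintro _ ⟨_, ⟨n, hn, rfl⟩, rfl⟩
      exact hg1 n hn
    exact (closure_minimal hsub isClosed_singleton) hmem
  have e0 : g z = 0 := by
    have hmem : g z ∈ closure (g '' (y '' Tᶜ)) :=
      image_closure_subset_closure_image g.continuous ⟨z, h2, rfl⟩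
    have hsub : g '' (y '' Tᶜ) ⊆ {0} := by
      rintro _ ⟨_, ⟨n, hn, rfl⟩, rfl⟩
      exact hg0 n hn
    exact (closure_minimal hsub isClosed_singleton) hmem
  rw [e1] at e0
  exact one_ne_zero e0

lemma ultrafilter_eq_of_tendsto {y : ℕ → X} (hinj : Function.Injective y)
    (hdisc : DiscreteTopology ↥(Set.range y)) (hcs : CStarEmbedded (Set.range y))
    {u v : Ultrafilter ℕ} {z : X} (hu : Tendsto y ↑u (𝓝 z)) (hv : Tendsto y ↑v (𝓝 z)) :
    u = v := by
  by_contra hne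
  have hle : ¬ ((↑u : Filter ℕ) ≤ (↑v : Filter ℕ)) := fun h => hne (Ultrafilter.coe_le_coe.mp h)
  obtain ⟨T, hTv, hTu'⟩ : ∃ T ∈ v, T ∉ u := by
    by_contra hc
    push_neg at hc
    exact hle fun T hT => hc T hT
  have hTu : Tᶜ ∈ u := Ultrafilter.compl_mem_iff_notMem.mpr hTu'
  have h1 : z ∈ closure (y '' T) :=
    mem_closure_of_tendsto hv (mem_of_superset hTv fun n hn => Set.mem_image_of_mem y hn)
  have h2 : z ∈ closure (y '' Tᶜ) :=
    mem_closure_of_tendsto hu (mem_of_superset hTu fun n hn => Set.mem_image_of_mem y hn)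
  have := closure_disjoint_of_cstar hinj hdisc hcs T
  rw [Set.eq_empty_iff_forall_notMem] at this
  exact this z ⟨h1, h2⟩

end Helpers

lemma exists_injOn_seq {X : Type*} [TopologicalSpace X] [CompactSpace X] [T2Space X]
    (s : ℕ → X) : ∃ F : C(X, ℝ), ∀ i j, F (s i) = F (s j) → s i = s j := by
  classical
  -- Urysohn functions: f k is 1 at s k and 0 at earlier points with different value
  have hf : ∀ k : ℕ, ∃ f : C(X, ℝ), f (s k) = 1 ∧ (∀ i < k, s i ≠ s k → f (s i) = 0) ∧
      ∀ z, f z ∈ Set.Icc (0:ℝ) 1 := by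
    intro k
    have hZfin : (s '' {i | i < k ∧ s i ≠ s k}).Finite :=
      Set.Finite.image s ((Set.finite_Iio k).subset fun i hi => hi.1)
    have hd : Disjoint (s '' {i | i < k ∧ s i ≠ s k}) {s k} := by
      rw [Set.disjoint_singleton_right]
      rintro ⟨i, ⟨hik, hne⟩, hi⟩
      exact hne hi
    obtain ⟨f, hf0, hf1, hficc⟩ :=
      exists_continuous_zero_one_of_isClosed hZfin.isClosed isClosed_singleton hd
    exact ⟨f, by simpa using hf1 rfl, fun i hik hne => by simpa using hf0 ⟨i, ⟨hik, hne⟩, rfl⟩,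
      hficc⟩
  choose f hf1 hf0 hficc using hf
  -- partial sums
  set Pax : (ℕ → ℝ) → ℕ → ℝ := fun c j => ∑ i ∈ Finset.range (j+1), c i * f i (s j) with hPax
  set Pk : (ℕ → ℝ) → ℕ → ℝ := fun c k => ∑ i ∈ Finset.range k, c i * f i (s k) with hPk
  set Vals : (ℕ → ℝ) → ℕ → Finset ℝ := fun c k => (Finset.range k).image (Pax c) with hVals
  have hex : ∀ (prev : ℕ → ℝ) (k : ℕ), ∃ r : ℝ, 0 < r ∧ r ≤ (1/2:ℝ)^k ∧
      Pk prev k + r ∉ Vals prev k := by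
    intro prev k
    have hIoo : (Set.Ioo (0:ℝ) ((1/2:ℝ)^k)).Infinite :=
      Set.infinite_coe_iff.mp (Set.Ioo.infinite (by positivity))
    have hbad : ((fun r : ℝ => Pk prev k + r) ⁻¹' (Vals prev k : Set ℝ)).Finite :=
      Set.Finite.preimage (Set.injOn_of_injective (add_right_injective _))
        (Vals prev k).finite_toSet
    obtain ⟨r, hr⟩ := (hIoo.diff hbad).nonempty
    exact ⟨r, hr.1.1, le_of_lt hr.1.2, hr.2⟩
  set nc : (ℕ → ℝ) → ℕ → ℝ := fun prev k =>
    if ∃ i, i < k ∧ s i = s k then 0 else (hex prev k).choose with hnc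
  set crec : ℕ → (ℕ → ℝ) := fun k =>
    Nat.rec (fun _ => (0:ℝ)) (fun k prev => Function.update prev k (nc prev k)) k with hcrec
  set c : ℕ → ℝ := fun k => crec (k+1) k with hcdef
  have hcrec_succ : ∀ k, crec (k+1) = Function.update (crec k) k (nc (crec k) k) := fun k => rfl
  have hc_def : ∀ k, c k = nc (crec k) k := by
    intro k
    rw [hcdef]
    simp only [hcrec_succ, Function.update_self]
  have hagree : ∀ k j, j < k → crec k j = c j := by
    intro k
    induction k with
    | zero => intro j hj; omega
    | succ k ih =>
      intro j hj
      rw [hcrec_succ]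
      rcases Nat.lt_succ_iff_lt_or_eq.mp hj with h | h
      · rw [Function.update_of_ne (by omega : j ≠ k)]; exact ih j h
      · subst h; rw [Function.update_self]; exact (hc_def j).symm
  have hPk_eq : ∀ k, Pk (crec k) k = Pk c k := by
    intro k
    apply Finset.sum_congr rfl
    intro i hi
    rw [hagree k i (Finset.mem_range.mp hi)]
  have hPax_eq : ∀ k j, j < k → Pax (crec k) j = Pax c j := by
    intro k j hj
    apply Finset.sum_congr rfl
    intro i hi
    rw [hagree k i (by have := Finset.mem_range.mp hi; omega)]
  have hVals_eq : ∀ k, Vals (crec k) k = Vals c k := by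
    intro k
    apply Finset.image_congr
    intro j hj
    exact hPax_eq k j (Finset.mem_range.mp hj)
  have hc_bound : ∀ k, ‖c k‖ ≤ (1/2:ℝ)^k := by
    intro k
    rw [hc_def, hnc]
    dsimp only
    split
    · rw [norm_zero]; positivity
    · have h := (hex (crec k) k).choose_spec
      rw [Real.norm_eq_abs, abs_of_pos h.1]
      exact h.2.1
  have hc_dup : ∀ k, (∃ i, i < k ∧ s i = s k) → c k = 0 := by
    intro k hk
    rw [hc_def, hnc]
    exact if_pos hk
  have hc_nodup : ∀ k, ¬(∃ i, i < k ∧ s i = s k) → Pk c k + c k ∉ Vals c k := by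
    intro k hk
    rw [hc_def, hnc]
    dsimp only
    rw [if_neg hk, ← hPk_eq, ← hVals_eq]
    exact (hex (crec k) k).choose_spec.2.2
  -- the function F
  have hsum : Summable (fun k => c k • f k) := by
    apply Summable.of_norm_bounded (g := fun k => (1/2:ℝ)^k) summable_geometric_two
    intro k
    have hns : ‖c k • f k‖ = ‖c k‖ * ‖f k‖ := norm_smul (c k) (f k)
    rw [hns]
    calc ‖c k‖ * ‖f k‖ ≤ (1/2:ℝ)^k * 1 := by
          apply mul_le_mul (hc_bound k) ?_ (norm_nonneg _) (by positivity)
          rw [ContinuousMap.norm_le _ zero_le_one]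
          intro z
          rw [Real.norm_eq_abs, abs_le]
          have := hficc k z
          exact ⟨by linarith [this.1], this.2⟩
      _ = (1/2:ℝ)^k := mul_one _
  set F : C(X, ℝ) := ∑' k, c k • f k with hF
  have hFapp : ∀ z, F z = ∑' k, c k * f k z := by
    intro z
    rw [hF, ← ContinuousMap.tsum_apply hsum]
    exact tsum_congr fun k => by simp
  have hFs : ∀ j, F (s j) = Pax c j := by
    intro j
    rw [hFapp]
    rw [tsum_eq_sum (s := Finset.range (j+1)) ?_]
    intro k hk
    have hkj : j < k := by
      rcases Nat.lt_or_ge j k with h | h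
      · exact h
      · exact absurd (Finset.mem_range.mpr (by omega)) hk
    by_cases hd : ∃ i, i < k ∧ s i = s k
    · rw [hc_dup k hd]; ring
    · have hne : s j ≠ s k := fun h => hd ⟨j, hkj, h⟩
      rw [hf0 k j hkj hne]; ring
  -- injectivity
  refine ⟨F, ?_⟩
  have key : ∀ a b : ℕ, a < b → ¬(∃ m, m < b ∧ s m = s b) → F (s a) ≠ F (s b) := by
    intro a b hab hnd heq
    have hFb : F (s b) = Pk c b + c b := by
      rw [hFs b, hPax, hPk]
      dsimp only
      rw [Finset.sum_range_succ, hf1 b, mul_one]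
    have hmem : F (s a) ∈ Vals c b :=
      Finset.mem_image.mpr ⟨a, Finset.mem_range.mpr hab, (hFs a).symm⟩
    rw [heq, hFb] at hmem
    exact hc_nodup b hnd hmem
  intro i j hij
  set fo : ℕ → ℕ := fun i => Nat.find (⟨i, rfl⟩ : ∃ m, s m = s i) with hfo
  have hfo_eq : ∀ i, s (fo i) = s i := fun i => Nat.find_spec (⟨i, rfl⟩ : ∃ m, s m = s i)
  have hnodup : ∀ i, ¬ ∃ m, m < fo i ∧ s m = s (fo i) := by
    rintro i ⟨m, hm, hms⟩
    exact Nat.find_min (⟨i, rfl⟩ : ∃ m, s m = s i) hm (hms.trans (hfo_eq i))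
  have hij' : F (s (fo i)) = F (s (fo j)) := by rw [hfo_eq, hfo_eq, hij]
  rcases lt_trichotomy (fo i) (fo j) with h | h | h
  · exact absurd hij' (key _ _ h (hnodup j))
  · rw [← hfo_eq i, h, hfo_eq j]
  · exact absurd hij'.symm (key _ _ h (hnodup i))

/-- Let `X` be a compact Hausdorff βω-space, `p` a nonprincipal ultrafilter
which is a discretely weak P-point of `ω*`, `q` a nonprincipal discrete ultrafilter,
`(d m)` an injective discrete sequence in `X`, `(e n)` any sequence in `X`, with `x` both
the `p`-limit of `(d m)` and the `q`-limit of `(e n)`, and `{n : e n = x} ∉ q`.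
Then `p ≤_RK q`. -/
theorem rudinKeisler_le_of_betaOmega (X : Type*) [TopologicalSpace X] [CompactSpace X]
    [T2Space X] (hX : IsBetaOmegaSpace X)
    (p q : Ultrafilter ℕ) (hp : ∀ n : ℕ, p ≠ pure n) (hq : ∀ n : ℕ, q ≠ pure n)
    (hdwp : ∀ D : Set ↥omegaStar, D.Countable → DiscreteTopology ↥D →
      (⟨p, hp⟩ : ↥omegaStar) ∉ D → (⟨p, hp⟩ : ↥omegaStar) ∉ closure D)
    (hq_disc : ∀ f : ℕ → ℝ, ∃ A ∈ q, DiscreteTopology ↥(f '' A))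
    (x : X) (d : ℕ → X) (hd_inj : Function.Injective d)
    (hd_disc : DiscreteTopology ↥(Set.range d))
    (e : ℕ → X)
    (hd_lim : Filter.Tendsto d ↑p (𝓝 x))
    (he_lim : Filter.Tendsto e ↑q (𝓝 x))
    (hne : {n : ℕ | e n = x} ∉ q) :
    ∃ g : ℕ → ℕ, Ultrafilter.map g q = p := by
  classical
  have hCS : ∀ S : Set X, S.Countable → DiscreteTopology ↥S → CStarEmbedded S :=
    fun S hc hd => hX S hc hd (IsClosed.isCompact isClosed_closure)
  have hDcs : CStarEmbedded (Set.range d) := hCS _ (Set.countable_range d) hd_disc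
  -- x is not in the range of d
  have hxD : x ∉ Set.range d := by
    rintro ⟨m, rfl⟩
    obtain ⟨U, hU, hUD⟩ := isolated_of_discrete hd_disc (d m) ⟨m, rfl⟩
    have hUm : d m ∈ U := by
      have : d m ∈ U ∩ Set.range d := by rw [hUD]; rfl
      exact this.1
    have h1 : {n | d n ∈ U} ∈ p := hd_lim (hU.mem_nhds hUm)
    have hsub : {n | d n ∈ U} ⊆ {m} := by
      intro n hn
      have : d n ∈ U ∩ Set.range d := ⟨hn, ⟨n, rfl⟩⟩
      rw [hUD] at this
      exact hd_inj this
    have hmem : {m} ∈ p := mem_of_superset h1 hsub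
    have hle : (↑p : Filter ℕ) ≤ pure m := Filter.le_pure_iff.mpr hmem
    have : (↑p : Filter ℕ) = ↑(pure m : Ultrafilter ℕ) :=
      Ultrafilter.unique (pure m) (by rwa [Ultrafilter.coe_pure])
    exact hp m (Ultrafilter.coe_injective this)
  have hclD : ∀ {A : Set ℕ}, A ∈ p → x ∈ closure (d '' A) := fun hA =>
    mem_closure_of_tendsto hd_lim (mem_of_superset hA fun n hn => Set.mem_image_of_mem d hn)
  have hclE : ∀ {A : Set ℕ}, A ∈ q → x ∈ closure (e '' A) := fun hA =>
    mem_closure_of_tendsto he_lim (mem_of_superset hA fun n hn => Set.mem_image_of_mem e hn)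
  -- a continuous function injective on {x} ∪ range e
  obtain ⟨F, hF⟩ := exists_injOn_seq (fun n => Nat.rec (motive := fun _ => X) x (fun k _ => e k) n)
  have hFe : ∀ i j : ℕ, F (e i) = F (e j) → e i = e j := fun i j h => hF (i+1) (j+1) h
  have hFx : ∀ i : ℕ, F (e i) = F x → e i = x := fun i h => hF (i+1) 0 h
  -- the discrete q-large set B
  obtain ⟨A, hAq, hAdisc⟩ := hq_disc (fun n => F (e n))
  set B : Set ℕ := A ∩ {n | e n ≠ x} with hBdef
  have hBq : B ∈ q := by
    refine inter_mem hAq ?_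
    have := Ultrafilter.compl_mem_iff_notMem.mpr hne
    exact this
  have hisoB : ∀ n ∈ B, ∃ U, IsOpen U ∧ U ∩ (e '' B) = {e n} := by
    intro n hn
    obtain ⟨I, hI, hIA⟩ := isolated_of_discrete hAdisc (F (e n)) ⟨n, hn.1, rfl⟩
    refine ⟨F ⁻¹' I, hI.preimage F.continuous, ?_⟩
    ext z
    constructor
    · rintro ⟨hz, m, hm, rfl⟩
      have hmem : F (e m) ∈ I ∩ ((fun n => F (e n)) '' A) := ⟨hz, ⟨m, hm.1, rfl⟩⟩
      rw [hIA] at hmem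
      exact Set.mem_singleton_iff.mpr (hFe m n hmem)
    · intro hz
      rw [Set.mem_singleton_iff] at hz
      subst hz
      have : F (e n) ∈ I ∩ ((fun n => F (e n)) '' A) := by rw [hIA]; rfl
      exact ⟨this.1, ⟨n, hn, rfl⟩⟩
  -- MAIN CASE SPLIT
  by_cases hZ : {n | e n ∈ Set.range d} ∈ q
  · -- e n hits D itself q-often: direct construction
    set g : ℕ → ℕ := fun n => if h : ∃ m, d m = e n then h.choose else 0 with hgdef
    refine ⟨g, ?_⟩
    have hdg : ∀ n ∈ {n | e n ∈ Set.range d}, d (g n) = e n := by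
      intro n hn
      rcases hn with ⟨m, hm⟩
      rw [hgdef]
      simp only
      rw [dif_pos ⟨m, hm⟩]
      exact (⟨m, hm⟩ : ∃ m, d m = e n).choose_spec
    have htend : Tendsto d ↑(Ultrafilter.map g q) (𝓝 x) := by
      rw [Ultrafilter.coe_map, Filter.tendsto_map'_iff]
      refine Filter.Tendsto.congr' ?_ he_lim
      exact Filter.eventually_of_mem hZ fun n hn => (hdg n hn).symm
    exact ultrafilter_eq_of_tendsto hd_inj hd_disc hDcs htend hd_lim
  · have hZc : {n | e n ∈ Set.range d}ᶜ ∈ q := Ultrafilter.compl_mem_iff_notMem.mpr hZ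
    by_cases hW : {n | e n ∈ closure (Set.range d)} ∈ q
    · -- dwP contradiction
      exfalso
      set B₁ : Set ℕ := (B ∩ {n | e n ∈ closure (Set.range d)}) ∩ {n | e n ∈ Set.range d}ᶜ
        with hB₁def
      have hB₁ : B₁ ∈ q := inter_mem (inter_mem hBq hW) hZc
      have hUex : ∀ n, ∃ u : Ultrafilter ℕ, e n ∈ closure (Set.range d) →
          Tendsto d ↑u (𝓝 (e n)) := by
        intro n
        by_cases h : e n ∈ closure (Set.range d)
        · obtain ⟨u, hu⟩ := exists_ultrafilter_tendsto h
          exact ⟨u, fun _ => hu⟩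
        · exact ⟨pure 0, fun h' => absurd h' h⟩
      choose U hU using hUex
      have hUnp : ∀ n ∈ B₁, ∀ k, U n ≠ pure k := by
        intro n hn k hk
        have ht : Tendsto d ↑(U n) (𝓝 (e n)) := hU n hn.1.2
        rw [hk] at ht
        have h2 : Tendsto d ↑(pure k : Ultrafilter ℕ) (𝓝 (d k)) := by
          rw [Ultrafilter.coe_pure]
          exact tendsto_pure_nhds d k
        have := tendsto_nhds_unique ht h2
        exact hn.2 ⟨k, this.symm⟩
      have hUne : ∀ n ∈ B₁, U n ≠ p := by
        intro n hn h
        have ht : Tendsto d ↑(U n) (𝓝 (e n)) := hU n hn.1.2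
        rw [h] at ht
        exact hn.1.1.2 (tendsto_nhds_unique ht hd_lim)
      have hUuniq : ∀ m ∈ B₁, ∀ n ∈ B₁, e m = e n → U m = U n := by
        intro m hm n hn hmn
        refine ultrafilter_eq_of_tendsto hd_inj hd_disc hDcs (hU m hm.1.2) ?_
        rw [hmn]
        exact hU n hn.1.2
      set DD : Set ↥omegaStar := {v | ∃ n ∈ B₁, (v : Ultrafilter ℕ) = U n} with hDDdef
      have hDDcount : DD.Countable := by
        have hsub : DD ⊆ ⋃ n ∈ B₁, {v : ↥omegaStar | (v : Ultrafilter ℕ) = U n} := by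
          rintro v ⟨n, hn, h⟩
          exact Set.mem_biUnion hn h
        refine Set.Countable.mono hsub ?_
        refine Set.Countable.biUnion (Set.to_countable _) fun n _ => ?_
        exact Set.Subsingleton.countable fun a ha b hb => Subtype.ext (ha.trans hb.symm)
      have hDDp : (⟨p, hp⟩ : ↥omegaStar) ∉ DD := by
        rintro ⟨n, hn, h⟩
        exact hUne n hn h.symm
      have hDDdisc : DiscreteTopology ↥DD := by
        apply discrete_of_isolated
        rintro v ⟨n, hn, hv⟩
        obtain ⟨Uo, hUo, hUoB⟩ := hisoB n hn.1.1
        have henUo : e n ∈ Uo := by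
          have : e n ∈ Uo ∩ (e '' B) := by rw [hUoB]; rfl
          exact this.1
        obtain ⟨C, hC, hCcl, hCsub⟩ := exists_mem_nhds_isClosed_subset (hUo.mem_nhds henUo)
        set An : Set ℕ := d ⁻¹' (interior C) with hAndef
        refine ⟨Subtype.val ⁻¹' {u : Ultrafilter ℕ | An ∈ u},
          (ultrafilter_isOpen_basic _).preimage continuous_subtype_val, ?_⟩
        ext w
        simp only [Set.mem_inter_iff, Set.mem_preimage, Set.mem_setOf_eq,
          Set.mem_singleton_iff]
        constructor
        · rintro ⟨hwA, m, hm, hwU⟩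
          have h1 : e m ∈ closure (d '' An) := by
            refine mem_closure_image_of_tendsto (hU m hm.1.2) ?_
            rw [← hwU]; exact hwA
          have h2 : closure (d '' An) ⊆ Uo := by
            refine subset_trans (closure_mono (Set.image_preimage_subset d _)) ?_
            exact subset_trans (closure_minimal interior_subset hCcl) hCsub
          have h3 : e m ∈ Uo ∩ (e '' B) := ⟨h2 h1, ⟨m, hm.1.1, rfl⟩⟩
          rw [hUoB] at h3
          have h4 : U m = U n := hUuniq m hm n hn h3
          apply Subtype.ext
          rw [hwU, h4, hv]
        · intro hwv
          subst hwv
          constructor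
          · rw [hv]
            exact hU n hn.1.2 (interior_mem_nhds.mpr hC)
          · exact ⟨n, hn, hv⟩
      have hpcl : (⟨p, hp⟩ : ↥omegaStar) ∈ closure DD := by
        rw [mem_closure_iff]
        intro O hO hpO
        obtain ⟨Obig, hObig, hOeq⟩ := isOpen_induced_iff.mp hO
        have hpObig : p ∈ Obig := by rw [← hOeq] at hpO; exact hpO
        obtain ⟨V, hVb, hpV, hVsub⟩ :=
          ultrafilterBasis_is_basis.exists_subset_of_mem_open hpObig hObig
        obtain ⟨Aset, hAset⟩ := hVb
        have hAp : Aset ∈ p := by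
          rw [← hAset] at hpV
          exact hpV
        have hxA : x ∈ closure (d '' Aset) := hclD hAp
        have hdisj := closure_disjoint_of_cstar hd_inj hd_disc hDcs Aset
        have hxnotin : x ∉ closure (d '' Asetᶜ) := by
          intro h
          rw [Set.eq_empty_iff_forall_notMem] at hdisj
          exact hdisj x ⟨hxA, h⟩
        have hUopen : IsOpen (closure (d '' Asetᶜ))ᶜ := isClosed_closure.isOpen_compl
        have hq1 : {n | e n ∈ (closure (d '' Asetᶜ))ᶜ} ∈ q := he_lim (hUopen.mem_nhds hxnotin)
        obtain ⟨n, hn1, hn2⟩ := Ultrafilter.nonempty_of_mem (inter_mem hB₁ hq1)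
        have hAUn : Aset ∈ U n := by
          by_contra hA
          have hAc : Asetᶜ ∈ U n := Ultrafilter.compl_mem_iff_notMem.mpr hA
          exact hn2 (mem_closure_image_of_tendsto (hU n hn1.1.2) hAc)
        refine ⟨⟨U n, fun k => hUnp n hn1 k⟩, ?_, ⟨n, hn1, rfl⟩⟩
        rw [← hOeq]
        exact Set.mem_preimage.mpr (hVsub (by rw [← hAset]; exact hAUn))
      exact hdwp DD hDDcount hDDdisc hDDp hpcl
    · -- Case II : e avoids closure (range d) q-often
      have hWc : {n | e n ∈ closure (Set.range d)}ᶜ ∈ q :=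
        Ultrafilter.compl_mem_iff_notMem.mpr hW
      set B2 : Set ℕ := B ∩ {n | e n ∈ closure (Set.range d)}ᶜ with hB2def
      have hB2 : B2 ∈ q := inter_mem hBq hWc
      set E : Set X := e '' B2 with hEdef
      have hEavoid : ∀ z ∈ E, z ∉ closure (Set.range d) := by
        rintro z ⟨n, hn, rfl⟩
        exact hn.2
      have hxE : x ∉ E := by
        rintro ⟨n, hn, h⟩
        exact hn.1.2 h
      have hisoE : ∀ z ∈ E, ∃ Uu, IsOpen Uu ∧ Uu ∩ E = {z} := by
        rintro z ⟨n, hn, rfl⟩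
        obtain ⟨Uo, hUo, hUoB⟩ := hisoB n hn.1
        refine ⟨Uo, hUo, ?_⟩
        apply Set.Subset.antisymm
        · intro w hw
          rw [← hUoB]
          exact ⟨hw.1, Set.image_mono Set.inter_subset_left hw.2⟩
        · intro w hw
          rw [Set.mem_singleton_iff] at hw
          subst hw
          have : e n ∈ Uo ∩ (e '' B) := by rw [hUoB]; rfl
          exact ⟨this.1, ⟨n, hn, rfl⟩⟩
      have hEdisc : DiscreteTopology ↥E := discrete_of_isolated hisoE
      have hxclE : x ∈ closure E := hclE hB2
      have hEinf : E.Infinite := by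
        intro hfin
        exact hxE (hfin.isClosed.closure_eq ▸ hxclE)
      -- enumerate E
      have hEcnt : E.Countable := Set.Countable.image (Set.to_countable B2) e
      haveI : Countable ↥E := hEcnt.to_subtype
      haveI : Infinite ↥E := hEinf.to_subtype
      haveI : Encodable ↥E := Encodable.ofCountable _
      letI : Denumerable ↥E := Denumerable.ofEncodableOfInfinite _
      set y : ℕ → X := fun k => ((Denumerable.eqv ↥E).symm k : X) with hydef
      have hy_inj : Function.Injective y := fun a b h =>
        (Denumerable.eqv ↥E).symm.injective (Subtype.val_injective h)
      have hy_range : Set.range y = E := by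
        rw [hydef]
        have : Set.range (fun k => ((Denumerable.eqv ↥E).symm k : X)) =
            Subtype.val '' Set.range ((Denumerable.eqv ↥E).symm) := by
          rw [← Set.range_comp]; rfl
        rw [this, Equiv.range_eq_univ, Set.image_univ, Subtype.range_coe]
      have hydisc : DiscreteTopology ↥(Set.range y) := by rw [hy_range]; exact hEdisc
      have hEcs : CStarEmbedded (Set.range y) := hCS _ (Set.countable_range y) hydisc
      -- σ, t
      set σ : ℕ → ℕ := fun n => if h : ∃ k, y k = e n then h.choose else 0 with hσdef
      have hyσ : ∀ n ∈ B2, y (σ n) = e n := by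
        intro n hn
        have hex : ∃ k, y k = e n := by
          have : e n ∈ Set.range y := hy_range ▸ ⟨n, hn, rfl⟩
          exact this
        rw [hσdef]
        simp only
        rw [dif_pos hex]
        exact hex.choose_spec
      set t : Ultrafilter ℕ := Ultrafilter.map σ q with htdef
      have ht_lim : Tendsto y ↑t (𝓝 x) := by
        rw [htdef, Ultrafilter.coe_map, Filter.tendsto_map'_iff]
        refine Filter.Tendsto.congr' ?_ he_lim
        exact Filter.eventually_of_mem hB2 fun n hn => (hyσ n hn).symm
      set P : Set ℕ := {m | d m ∈ closure E} with hPdef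
      by_cases hP : P ∈ p
      · -- case II.b : build g'
        have hclEy : closure E = closure (Set.range y) := by rw [hy_range]
        have hwex : ∀ m, ∃ u : Ultrafilter ℕ, d m ∈ closure E → Tendsto y ↑u (𝓝 (d m)) := by
          intro m
          by_cases h : d m ∈ closure E
          · obtain ⟨u, hu⟩ := exists_ultrafilter_tendsto (hclEy ▸ h)
            exact ⟨u, fun _ => hu⟩
          · exact ⟨pure 0, fun h' => absurd h' h⟩
        choose w hw using hwex
        have hAex : ∀ m ∈ P, ∃ Am : Set ℕ, Am ∈ w m ∧ ∀ j ∈ P, Am ∈ w j → j = m := by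
          intro m hm
          obtain ⟨V, hV, hVD⟩ := isolated_of_discrete hd_disc (d m) ⟨m, rfl⟩
          have hdmV : d m ∈ V := by
            have : d m ∈ V ∩ Set.range d := by rw [hVD]; rfl
            exact this.1
          obtain ⟨C, hC, hCcl, hCsub⟩ := exists_mem_nhds_isClosed_subset (hV.mem_nhds hdmV)
          refine ⟨y ⁻¹' interior C, hw m hm (interior_mem_nhds.mpr hC), ?_⟩
          intro j hj hmem
          have h1 : d j ∈ closure (y '' (y ⁻¹' interior C)) :=
            mem_closure_image_of_tendsto (hw j hj) hmem
          have h2 : closure (y '' (y ⁻¹' interior C)) ⊆ V := by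
            refine subset_trans (closure_mono (Set.image_preimage_subset y _)) ?_
            exact subset_trans (closure_minimal interior_subset hCcl) hCsub
          have h3 : d j ∈ V ∩ Set.range d := ⟨h2 h1, ⟨j, rfl⟩⟩
          rw [hVD] at h3
          exact hd_inj h3
        choose! Am hAm1 hAm2 using hAex
        set Cm : ℕ → Set ℕ := fun m =>
          Am m ∩ ⋂ j ∈ Finset.range m, (if j ∈ P then (Am j)ᶜ else Set.univ) with hCmdef
        have hCm_mem : ∀ m ∈ P, Cm m ∈ w m := by
          intro m hm
          refine inter_mem (hAm1 m hm) ?_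
          rw [biInter_finset_mem]
          intro j hj
          by_cases hjP : j ∈ P
          · rw [if_pos hjP]
            refine Ultrafilter.compl_mem_iff_notMem.mpr ?_
            intro hmem
            have := hAm2 j hjP m hm hmem
            have hjm := Finset.mem_range.mp hj
            omega
          · rw [if_neg hjP]
            exact Filter.univ_mem
        have hCm_sub : ∀ m, Cm m ⊆ Am m := fun m => Set.inter_subset_left
        have hCm_disj : ∀ m₁ ∈ P, ∀ m₂ ∈ P, m₁ ≠ m₂ → ∀ k, k ∈ Cm m₁ → k ∉ Cm m₂ := by
          intro m₁ hm₁ m₂ hm₂ hne12 k hk1 hk2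
          rcases Nat.lt_or_ge m₁ m₂ with h | h
          · have := hk2.2
            have hmem : k ∈ (if m₁ ∈ P then (Am m₁)ᶜ else Set.univ) := by
              have := Set.mem_iInter₂.mp hk2.2 m₁ (Finset.mem_range.mpr h)
              exact this
            rw [if_pos hm₁] at hmem
            exact hmem (hCm_sub m₁ hk1)
          · have hlt : m₂ < m₁ := by omega
            have hmem : k ∈ (if m₂ ∈ P then (Am m₂)ᶜ else Set.univ) := by
              have := Set.mem_iInter₂.mp hk1.2 m₂ (Finset.mem_range.mpr hlt)
              exact this
            rw [if_pos hm₂] at hmem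
            exact hmem (hCm_sub m₂ hk2)
        set g' : ℕ → ℕ := fun k => if h : ∃ m, m ∈ P ∧ k ∈ Cm m then h.choose else 0
          with hg'def
        have hg' : ∀ m ∈ P, ∀ k ∈ Cm m, g' k = m := by
          intro m hm k hk
          rw [hg'def]
          simp only
          rw [dif_pos ⟨m, hm, hk⟩]
          set m' := (⟨m, hm, hk⟩ : ∃ m, m ∈ P ∧ k ∈ Cm m).choose with hm'def
          have hspec := (⟨m, hm, hk⟩ : ∃ m, m ∈ P ∧ k ∈ Cm m).choose_spec
          by_contra hne'
          exact hCm_disj m hm m' hspec.1 (fun h => hne' h.symm) k hk hspec.2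
        have hkey : (↑(Ultrafilter.map g' t) : Filter ℕ) ≤ ↑p := by
          rw [Filter.le_def]
          intro Aset hAset
          set T : Set ℕ := ⋃ m ∈ Aset ∩ P, Cm m with hTdef
          have hTsub : T ⊆ g' ⁻¹' Aset := by
            intro k hk
            rw [hTdef] at hk
            obtain ⟨m, hm, hkC⟩ := Set.mem_iUnion₂.mp hk
            have : g' k = m := hg' m hm.2 k hkC
            simp only [Set.mem_preimage, this]
            exact hm.1
          have hTt : T ∈ t := by
            by_contra hT
            have hTc : Tᶜ ∈ t := Ultrafilter.compl_mem_iff_notMem.mpr hT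
            have h1 : x ∈ closure (y '' Tᶜ) := mem_closure_image_of_tendsto ht_lim hTc
            have h2 : x ∈ closure (y '' T) := by
              have hsub : d '' (Aset ∩ P) ⊆ closure (y '' T) := by
                rintro _ ⟨m, hm, rfl⟩
                have hdm : d m ∈ closure (y '' Cm m) :=
                  mem_closure_image_of_tendsto (hw m hm.2) (hCm_mem m hm.2)
                refine closure_mono (Set.image_mono ?_) hdm
                exact Set.subset_iUnion₂ (s := fun m _ => Cm m) m hm
              exact closure_minimal hsub isClosed_closure (hclD (inter_mem hAset hP))
            have hdisj := closure_disjoint_of_cstar hy_inj hydisc hEcs T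
            rw [Set.eq_empty_iff_forall_notMem] at hdisj
            exact hdisj x ⟨h2, h1⟩
          rw [Ultrafilter.mem_coe, Ultrafilter.mem_map]
          exact mem_of_superset hTt hTsub
        have heq : (↑(Ultrafilter.map g' t) : Filter ℕ) = ↑p := Ultrafilter.unique p hkey
        refine ⟨g' ∘ σ, ?_⟩
        have : Ultrafilter.map g' t = p := Ultrafilter.coe_injective heq
        rw [← this, htdef, Ultrafilter.map_map]
      · -- case II.a : contradiction
        exfalso
        have hPc : Pᶜ ∈ p := Ultrafilter.compl_mem_iff_notMem.mpr hP
        set S : Set X := (d '' Pᶜ) ∪ E with hSdef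
        have hErange : ∀ z ∈ E, z ∉ Set.range d := fun z hz h =>
          hEavoid z hz (subset_closure h)
        have hSiso : ∀ z ∈ S, ∃ Uu, IsOpen Uu ∧ Uu ∩ S = {z} := by
          rintro z (⟨m, hm, rfl⟩ | hz)
          · obtain ⟨V, hV, hVD⟩ := isolated_of_discrete hd_disc (d m) ⟨m, rfl⟩
            refine ⟨V ∩ (closure E)ᶜ, hV.inter isClosed_closure.isOpen_compl, ?_⟩
            ext z'
            constructor
            · rintro ⟨⟨hzV, hzE⟩, hzS⟩
              rcases hzS with ⟨m', _, rfl⟩ | hz'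
              · have : d m' ∈ V ∩ Set.range d := ⟨hzV, ⟨m', rfl⟩⟩
                rw [hVD] at this
                exact this
              · exact absurd (subset_closure hz') hzE
            · intro hz'
              rw [Set.mem_singleton_iff] at hz'
              subst hz'
              have hdv : d m ∈ V := by
                have : d m ∈ V ∩ Set.range d := by rw [hVD]; rfl
                exact this.1
              exact ⟨⟨hdv, hm⟩, Or.inl ⟨m, hm, rfl⟩⟩
          · obtain ⟨Uo, hUo, hUoE⟩ := hisoE z hz
            refine ⟨Uo ∩ (closure (Set.range d))ᶜ,
              hUo.inter isClosed_closure.isOpen_compl, ?_⟩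
            ext z'
            constructor
            · rintro ⟨⟨hzU, hzD⟩, hzS⟩
              rcases hzS with ⟨m', _, rfl⟩ | hz'
              · exact absurd (subset_closure (Set.mem_range_self m')) hzD
              · have : z' ∈ Uo ∩ E := ⟨hzU, hz'⟩
                rw [hUoE] at this
                exact this
            · intro hz'
              rw [Set.mem_singleton_iff] at hz'
              rw [hz']
              have hzU : z ∈ Uo := by
                have : z ∈ Uo ∩ E := by rw [hUoE]; rfl
                exact this.1
              exact ⟨⟨hzU, hEavoid z hz⟩, Or.inr hz⟩
        have hSdisc : DiscreteTopology ↥S := discrete_of_isolated hSiso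
        have hScnt : S.Countable :=
          Set.Countable.union (Set.Countable.image (Set.to_countable _) d) hEcnt
        have hScs : CStarEmbedded S := hCS S hScnt hSdisc
        haveI := hSdisc
        set χ : C(↥S, ℝ) := ⟨fun z => if (z : X) ∈ E then 0 else 1,
          continuous_of_discreteTopology⟩ with hχdef
        obtain ⟨G, hG⟩ := hScs χ ⟨1, fun z => by
          simp only [hχdef, ContinuousMap.coe_mk]
          split <;> simp⟩
        have hG1 : ∀ m ∈ Pᶜ, G (d m) = 1 := by
          intro m hm
          have := hG ⟨d m, Or.inl ⟨m, hm, rfl⟩⟩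
          simp only [hχdef, ContinuousMap.coe_mk] at this
          rw [this, if_neg (fun h => hErange (d m) h ⟨m, rfl⟩)]
        have hG0 : ∀ z ∈ E, G z = 0 := by
          intro z hz
          have := hG ⟨z, Or.inr hz⟩
          simp only [hχdef, ContinuousMap.coe_mk] at this
          rw [this, if_pos hz]
        have hx1 : G x = 1 := by
          have hmem : G x ∈ closure (G '' (d '' Pᶜ)) :=
            image_closure_subset_closure_image G.continuous ⟨x, hclD hPc, rfl⟩
          have hsub : G '' (d '' Pᶜ) ⊆ {1} := by
            rintro _ ⟨_, ⟨m, hm, rfl⟩, rfl⟩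
            exact hG1 m hm
          exact (closure_minimal hsub isClosed_singleton) hmem
        have hx0 : G x = 0 := by
          have hmem : G x ∈ closure (G '' E) :=
            image_closure_subset_closure_image G.continuous ⟨x, hxclE, rfl⟩
          have hsub : G '' E ⊆ {0} := by
            rintro _ ⟨z, hz, rfl⟩
            exact hG0 z hz
          exact (closure_minimal hsub isClosed_singleton) hmem
        rw [hx1] at hx0
        exact one_ne_zero hx0
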